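/- Let m ≥ 1 and let A₁, …, A_m be elements of 𝔄. Then the symmetrized products converge: lim_{n→∞} fₙ({A_j}) = exp(∑_{j=1}^m A_j), the limit being taken in the norm of 𝔄. -/

import Mathlib

open Filter NormedSpace

/-- `fString 𝕜 A m n` is the symmetrized product string
`exp(A_m/(2n)) ⋯ exp(A₂/(2n)) · exp(A₁/n) · exp(A₂/(2n)) ⋯ exp(A_m/(2n))`,
where the elements are `A 1, …, A m`. -/
noncomputable def fString (𝕜 : Type*) [RCLike 𝕜] {𝔄 : Type*} [NormedRing 𝔄]
    [NormedAlgebra 𝕜 𝔄] (A : ℕ → 𝔄) (m n : ℕ) : 𝔄 :=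
  ((List.range' 2 (m - 1)).foldl
    (fun acc j => (expSeries 𝕜 𝔄).sum ((2 * n : 𝕜)⁻¹ • A j) * acc * (expSeries 𝕜 𝔄).sum ((2 * n : 𝕜)⁻¹ • A j))
    ((expSeries 𝕜 𝔄).sum ((n : 𝕜)⁻¹ • A 1)))

lemma expSeries_sum_eq_exp' (𝕜 : Type*) [RCLike 𝕜] {𝔄 : Type*} [NormedRing 𝔄]
    [NormedAlgebra 𝕜 𝔄] (x : 𝔄) : (expSeries 𝕜 𝔄).sum x = exp x :=
  (congrFun (exp_eq_expSeries_sum 𝕜) x).symm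

set_option linter.unusedSectionVars false

section ExpBounds
variable (𝕜 : Type*) [RCLike 𝕜] {𝔄 : Type*} [NormedRing 𝔄] [NormedAlgebra 𝕜 𝔄] [CompleteSpace 𝔄]

lemma expterm_norm_le (x : 𝔄) {k : ℕ} (hk : 1 ≤ k) :
    ‖((k.factorial : 𝕜))⁻¹ • x ^ k‖ ≤ ‖x‖ ^ k / k.factorial := by
  rw [norm_smul, norm_inv, RCLike.norm_natCast, div_eq_inv_mul]
  gcongr
  exact norm_pow_le' x hk

lemma real_exp_hasSum (r : ℝ) : HasSum (fun n : ℕ => r ^ n / n.factorial) (Real.exp r) := by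
  rw [Real.exp_eq_exp_ℝ]; exact expSeries_div_hasSum_exp_of_mem_ball ℝ r
    ((expSeries_radius_eq_top ℝ ℝ).symm ▸ edist_lt_top _ _)

lemma norm_exp_sub_one_le' (𝕜 : Type*) [RCLike 𝕜] [NormedAlgebra 𝕜 𝔄] (x : 𝔄) : ‖exp x - 1‖ ≤ Real.exp ‖x‖ - 1 := by
  have hs := exp_series_hasSum_exp' (𝕂 := 𝕜) x
  have htail : ∑' k : ℕ, ((((k+1).factorial : 𝕜))⁻¹ • x ^ (k+1)) = exp x - 1 := by
    have h := Summable.sum_add_tsum_nat_add (f := fun k : ℕ => ((k.factorial : 𝕜))⁻¹ • x ^ k) 1 hs.summable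
    rw [hs.tsum_eq] at h
    simp only [Finset.range_one, Finset.sum_singleton, Nat.factorial_zero, Nat.cast_one,
      inv_one, pow_zero, one_smul] at h
    rw [← h]; abel
  have hr : HasSum (fun k : ℕ => ‖x‖ ^ (k+1) / (k+1).factorial) (Real.exp ‖x‖ - 1) := by
    have := (hasSum_nat_add_iff' (f := fun n : ℕ => ‖x‖ ^ n / n.factorial) 1).mpr
      (real_exp_hasSum ‖x‖)
    simpa using this
  rw [← htail]
  exact tsum_of_norm_bounded hr fun i => expterm_norm_le 𝕜 x (Nat.le_add_left 1 i)

lemma norm_exp_sub_one_sub_le (𝕜 : Type*) [RCLike 𝕜] [NormedAlgebra 𝕜 𝔄] (x : 𝔄) :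
    ‖exp x - 1 - x‖ ≤ ‖x‖ ^ 2 * Real.exp ‖x‖ := by
  have hs := exp_series_hasSum_exp' (𝕂 := 𝕜) x
  have htail : ∑' k : ℕ, ((((k+2).factorial : 𝕜))⁻¹ • x ^ (k+2)) = exp x - 1 - x := by
    have h := Summable.sum_add_tsum_nat_add (f := fun k : ℕ => ((k.factorial : 𝕜))⁻¹ • x ^ k) 2 hs.summable
    rw [hs.tsum_eq] at h
    have h2 : ∑ i ∈ Finset.range 2, ((i.factorial : 𝕜))⁻¹ • x ^ i = 1 + x := by
      simp [Finset.sum_range_succ]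
    rw [h2] at h
    rw [← h]; abel
  have hr : HasSum (fun k : ℕ => ‖x‖ ^ 2 * (‖x‖ ^ k / k.factorial)) (‖x‖ ^ 2 * Real.exp ‖x‖) :=
    (real_exp_hasSum ‖x‖).mul_left _
  rw [← htail]
  refine tsum_of_norm_bounded hr fun i => ?_
  calc ‖(((i+2).factorial : 𝕜))⁻¹ • x ^ (i+2)‖ ≤ ‖x‖ ^ (i+2) / (i+2).factorial :=
        expterm_norm_le 𝕜 x (by omega)
    _ ≤ ‖x‖ ^ (i+2) / i.factorial := by
        apply div_le_div_of_nonneg_left (by positivity)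
        · exact_mod_cast i.factorial_pos
        · exact_mod_cast Nat.factorial_le (by omega)
    _ = ‖x‖ ^ 2 * (‖x‖ ^ i / i.factorial) := by rw [pow_add]; ring

lemma norm_exp_le' (𝕜 : Type*) [RCLike 𝕜] [NormedAlgebra 𝕜 𝔄] (x : 𝔄) (h1 : ‖(1:𝔄)‖ ≤ 1) : ‖exp x‖ ≤ Real.exp ‖x‖ := by
  calc ‖exp x‖ ≤ ‖(1:𝔄)‖ + ‖exp x - 1‖ := by
        simpa using norm_add_le (1:𝔄) (exp x - 1)
    _ ≤ 1 + (Real.exp ‖x‖ - 1) := add_le_add h1 (norm_exp_sub_one_le' 𝕜 x)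
    _ = Real.exp ‖x‖ := by ring

lemma exp_nsmul_K (𝕜 : Type*) [RCLike 𝕜] [NormedAlgebra 𝕜 𝔄] (n : ℕ) (x : 𝔄) : exp (n • x) = exp x ^ n := by
  induction n with
  | zero => rw [zero_smul, pow_zero, exp_zero]
  | succ n ih =>
    rw [succ_nsmul, pow_succ, exp_add_of_commute_of_mem_ball (𝕂 := 𝕜) ((Commute.refl x).smul_left n)
      ((expSeries_radius_eq_top 𝕜 𝔄).symm ▸ edist_lt_top _ _)
      ((expSeries_radius_eq_top 𝕜 𝔄).symm ▸ edist_lt_top _ _), ih]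
end ExpBounds


section Tele
variable {𝔄 : Type*} [NormedRing 𝔄] [NormOneClass 𝔄]

lemma norm_pow_le_of_le {a : 𝔄} {M : ℝ} (ha : ‖a‖ ≤ M) (n : ℕ) : ‖a ^ n‖ ≤ M ^ n := by
  induction n with
  | zero => simp
  | succ k ih =>
    calc ‖a ^ (k+1)‖ = ‖a * a ^ k‖ := by rw [pow_succ']
      _ ≤ ‖a‖ * ‖a ^ k‖ := norm_mul_le _ _
      _ ≤ M * M ^ k := by
          apply mul_le_mul ha ih (norm_nonneg _) ((norm_nonneg a).trans ha)
      _ = M ^ (k+1) := (pow_succ' M k).symm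

lemma norm_pow_sub_pow_le {a b : 𝔄} {M : ℝ} (hM : 1 ≤ M) (ha : ‖a‖ ≤ M) (hb : ‖b‖ ≤ M)
    (n : ℕ) : ‖a ^ n - b ^ n‖ ≤ n * M ^ n * ‖a - b‖ := by
  induction n with
  | zero => simp
  | succ k ih =>
    have hM0 : (0:ℝ) ≤ M := zero_le_one.trans hM
    have key : a ^ (k+1) - b ^ (k+1) = (a - b) * a ^ k + b * (a ^ k - b ^ k) := by
      rw [pow_succ', pow_succ']; noncomm_ring
    calc ‖a ^ (k+1) - b ^ (k+1)‖ ≤ ‖(a - b) * a ^ k‖ + ‖b * (a ^ k - b ^ k)‖ := by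
          rw [key]; exact norm_add_le _ _
      _ ≤ ‖a - b‖ * M ^ k + M * (k * M ^ k * ‖a - b‖) := by
          refine add_le_add ?_ ?_
          · exact (norm_mul_le _ _).trans (by
              apply mul_le_mul le_rfl (norm_pow_le_of_le ha k) (norm_nonneg _) (norm_nonneg _))
          · exact (norm_mul_le _ _).trans
              (mul_le_mul hb ih (norm_nonneg _) hM0)
      _ = ‖a - b‖ * M ^ k + k * M ^ (k+1) * ‖a - b‖ := by
          rw [pow_succ]; ring
      _ ≤ ‖a - b‖ * M ^ (k+1) + k * M ^ (k+1) * ‖a - b‖ := by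
          have h1 : M ^ k ≤ M ^ (k+1) := pow_le_pow_right₀ hM (by omega)
          have h3 : (0:ℝ) ≤ ‖a - b‖ := norm_nonneg _
          nlinarith
      _ = ↑(k+1) * M ^ (k+1) * ‖a - b‖ := by push_cast; ring
end Tele

section FS
variable (𝕜 : Type*) [RCLike 𝕜] {𝔄 : Type*} [NormedRing 𝔄] [NormedAlgebra 𝕜 𝔄] [CompleteSpace 𝔄]

lemma fString_one (A : ℕ → 𝔄) (n : ℕ) : fString 𝕜 A 1 n = exp ((n : 𝕜)⁻¹ • A 1) := by
  simp [fString, expSeries_sum_eq_exp']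

lemma fString_succ (A : ℕ → 𝔄) (m n : ℕ) (hm : 1 ≤ m) :
    fString 𝕜 A (m+1) n =
      exp ((2 * n : 𝕜)⁻¹ • A (m+1)) * fString 𝕜 A m n * exp ((2 * n : 𝕜)⁻¹ • A (m+1)) := by
  obtain ⟨k, rfl⟩ : ∃ k, m = k + 1 := ⟨m - 1, by omega⟩
  unfold fString
  simp only [expSeries_sum_eq_exp']
  have h1 : k + 1 + 1 - 1 = k + 1 := by omega
  have h2 : k + 1 - 1 = k := by omega
  rw [h1, h2, List.range'_concat, List.foldl_append]
  have h3 : 2 + 1 * k = k + 1 + 1 := by omega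
  simp only [h3]
  rfl
end FS

section Est
variable (𝕜 : Type*) [RCLike 𝕜] {𝔄 : Type*} [NormedRing 𝔄] [NormOneClass 𝔄]
  [NormedAlgebra 𝕜 𝔄] [CompleteSpace 𝔄]

lemma norm_inv_natCast (n : ℕ) : ‖((n : 𝕜))⁻¹‖ = (n : ℝ)⁻¹ := by
  rw [norm_inv, RCLike.norm_natCast]

lemma norm_inv_two_natCast (n : ℕ) : ‖((2 * n : 𝕜))⁻¹‖ = (2 * n : ℝ)⁻¹ := by
  rw [norm_inv, norm_mul, RCLike.norm_natCast, RCLike.norm_ofNat]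

lemma fString_est (A : ℕ → 𝔄) (m : ℕ) (hm : 1 ≤ m) :
    ∃ C : ℝ, 0 ≤ C ∧ ∀ n : ℕ, 1 ≤ n →
      ‖fString 𝕜 A m n - 1 - (n : 𝕜)⁻¹ • ∑ j ∈ Finset.Icc 1 m, A j‖ ≤ C / (n : ℝ) ^ 2 := by
  induction m, hm using Nat.le_induction with
  | base =>
    refine ⟨‖A 1‖ ^ 2 * Real.exp ‖A 1‖, by positivity, fun n hn => ?_⟩
    have hn0 : (0:ℝ) < n := by exact_mod_cast hn
    have hni : (n:ℝ)⁻¹ ≤ 1 := by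
      rw [inv_le_one_iff₀]; right; exact_mod_cast hn
    rw [fString_one, Finset.Icc_self, Finset.sum_singleton]
    have hx : ‖(n : 𝕜)⁻¹ • A 1‖ = (n:ℝ)⁻¹ * ‖A 1‖ := by
      rw [norm_smul, norm_inv_natCast]
    calc ‖exp ((n : 𝕜)⁻¹ • A 1) - 1 - (n : 𝕜)⁻¹ • A 1‖
        ≤ ‖(n : 𝕜)⁻¹ • A 1‖ ^ 2 * Real.exp ‖(n : 𝕜)⁻¹ • A 1‖ := norm_exp_sub_one_sub_le 𝕜 _
      _ ≤ ((n:ℝ)⁻¹ * ‖A 1‖) ^ 2 * Real.exp ‖A 1‖ := by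
          rw [hx]
          gcongr
          calc (n:ℝ)⁻¹ * ‖A 1‖ ≤ 1 * ‖A 1‖ := by gcongr
            _ = ‖A 1‖ := one_mul _
      _ = ‖A 1‖ ^ 2 * Real.exp ‖A 1‖ / (n:ℝ) ^ 2 := by
          field_simp
  | succ m hm ih =>
    obtain ⟨C, hC0, hC⟩ := ih
    set S := ∑ j ∈ Finset.Icc 1 m, A j with hS
    set a := A (m + 1) with ha
    have hsum : ∑ j ∈ Finset.Icc 1 (m+1), A j = S + a := by
      rw [Finset.sum_Icc_succ_top (by omega : 1 ≤ m + 1)]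
    set K := ‖a‖ with hK
    set C2 : ℝ := K ^ 2 * Real.exp K with hC2
    have hC2' : 0 ≤ C2 := by positivity
    set C3 : ℝ := C2 + K with hC3
    have hC3' : 0 ≤ C3 := by positivity
    set C5 : ℝ := ‖S‖ + C with hC5
    have hC5' : 0 ≤ C5 := by positivity
    set C4 : ℝ := 1 + C5 with hC4
    have hC4' : 0 ≤ C4 := by positivity
    refine ⟨C + C3 * C4 * C3 + C2 * C4 + C4 * C2 + K * C5 + C5 * K, by positivity, fun n hn => ?_⟩
    have hn0 : (0:ℝ) < n := by exact_mod_cast hn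
    have hn𝕜 : (n : 𝕜) ≠ 0 := Nat.cast_ne_zero.mpr (by omega)
    have hn1 : (1:ℝ) ≤ (n:ℝ) := by exact_mod_cast hn
    have hni : (n:ℝ)⁻¹ ≤ 1 := by rw [inv_le_one_iff₀]; right; exact hn1
    set u : 𝔄 := (2 * (n:𝕜))⁻¹ • a with hu
    set E := exp u with hE
    set P := fString 𝕜 A m n with hP
    set s : 𝔄 := (n : 𝕜)⁻¹ • S with hs
    have hun : ‖u‖ = (2 * (n:ℝ))⁻¹ * K := by rw [hu, norm_smul, norm_inv_two_natCast]
    have h2n : (2 * (n:ℝ))⁻¹ ≤ (n:ℝ)⁻¹ := by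
      rw [mul_inv]
      calc (2:ℝ)⁻¹ * (n:ℝ)⁻¹ ≤ 1 * (n:ℝ)⁻¹ := by gcongr; norm_num
        _ = (n:ℝ)⁻¹ := one_mul _
    have hKnn : 0 ≤ K := norm_nonneg _
    have hun' : ‖u‖ ≤ (n:ℝ)⁻¹ * K := by rw [hun]; gcongr
    have huK : ‖u‖ ≤ K := hun'.trans (by calc (n:ℝ)⁻¹ * K ≤ 1 * K := by gcongr
                                            _ = K := one_mul _)
    have hu2 : u + u = (n:𝕜)⁻¹ • a := by
      rw [hu, ← add_smul, ← two_mul, mul_inv, ← mul_assoc,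
        mul_inv_cancel₀ (two_ne_zero : (2:𝕜) ≠ 0), one_mul]
    have hE2 : ‖E - 1 - u‖ ≤ C2 / (n:ℝ)^2 := by
      calc ‖E - 1 - u‖ ≤ ‖u‖ ^ 2 * Real.exp ‖u‖ := norm_exp_sub_one_sub_le 𝕜 u
        _ ≤ ((n:ℝ)⁻¹ * K) ^ 2 * Real.exp K := by gcongr <;> simp [huK, hun', hun]
        _ = C2 / (n:ℝ)^2 := by rw [hC2]; ring
    have hE1 : ‖E - 1‖ ≤ C3 / (n:ℝ) := by
      have h1 : C2 / (n:ℝ)^2 ≤ C2 / (n:ℝ) := by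
        apply div_le_div_of_nonneg_left hC2' hn0
        nlinarith
      calc ‖E - 1‖ ≤ ‖E - 1 - u‖ + ‖u‖ := by
            simpa using norm_add_le (E - 1 - u) u
        _ ≤ C2 / (n:ℝ) + (n:ℝ)⁻¹ * K := add_le_add (hE2.trans h1) hun'
        _ = C3 / (n:ℝ) := by rw [hC3]; ring
    have hp : ‖P - 1 - s‖ ≤ C / (n:ℝ)^2 := hC n hn
    have hsn : ‖s‖ ≤ (n:ℝ)⁻¹ * ‖S‖ := by rw [hs, norm_smul, norm_inv_natCast]
    have hP1 : ‖P - 1‖ ≤ C5 / (n:ℝ) := by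
      have h1 : C / (n:ℝ)^2 ≤ C / (n:ℝ) := by
        apply div_le_div_of_nonneg_left hC0 hn0; nlinarith
      calc ‖P - 1‖ ≤ ‖P - 1 - s‖ + ‖s‖ := by simpa using norm_add_le (P - 1 - s) s
        _ ≤ C / (n:ℝ) + (n:ℝ)⁻¹ * ‖S‖ := add_le_add (hp.trans h1) hsn
        _ = C5 / (n:ℝ) := by rw [hC5]; ring
    have hPn : ‖P‖ ≤ C4 := by
      calc ‖P‖ ≤ ‖(1:𝔄)‖ + ‖P - 1‖ := by simpa using norm_add_le (1:𝔄) (P - 1)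
        _ ≤ 1 + C5 / (n:ℝ) := by rw [norm_one]; gcongr
        _ ≤ 1 + C5 := by
            have : C5 / (n:ℝ) ≤ C5 := by
              calc C5 / (n:ℝ) ≤ C5 / 1 := by gcongr
                _ = C5 := div_one _
            linarith
        _ = C4 := hC4.symm
    rw [fString_succ 𝕜 A m n hm, hsum]
    have hid : E * P * E - 1 - (n:𝕜)⁻¹ • (S + a) =
        (P - 1 - s) + (E - 1) * P * (E - 1) + (E - 1 - u) * P + P * (E - 1 - u)
          + u * (P - 1) + (P - 1) * u := by
      rw [smul_add, ← hu2, ← hs]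
      noncomm_ring
    rw [hid]
    have hCn3 : (0:ℝ) ≤ C3 / (n:ℝ) := div_nonneg hC3' hn0.le
    have hCn2 : (0:ℝ) ≤ C2 / (n:ℝ)^2 := div_nonneg hC2' (by positivity)
    have hCn5 : (0:ℝ) ≤ C5 / (n:ℝ) := div_nonneg hC5' hn0.le
    have hKn : (0:ℝ) ≤ (n:ℝ)⁻¹ * K := by positivity
    have t2 : ‖(E - 1) * P * (E - 1)‖ ≤ C3 * C4 * C3 / (n:ℝ)^2 := by
      calc ‖(E - 1) * P * (E - 1)‖ ≤ ‖(E - 1) * P‖ * ‖E - 1‖ := norm_mul_le _ _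
        _ ≤ ‖E - 1‖ * ‖P‖ * ‖E - 1‖ :=
            mul_le_mul_of_nonneg_right (norm_mul_le _ _) (norm_nonneg _)
        _ ≤ (C3 / (n:ℝ)) * C4 * (C3 / (n:ℝ)) :=
            mul_le_mul (mul_le_mul hE1 hPn (norm_nonneg _) hCn3) hE1 (norm_nonneg _)
              (mul_nonneg hCn3 hC4')
        _ = C3 * C4 * C3 / (n:ℝ)^2 := by ring
    have t3 : ‖(E - 1 - u) * P‖ ≤ C2 * C4 / (n:ℝ)^2 := by
      calc ‖(E - 1 - u) * P‖ ≤ ‖E - 1 - u‖ * ‖P‖ := norm_mul_le _ _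
        _ ≤ (C2 / (n:ℝ)^2) * C4 := mul_le_mul hE2 hPn (norm_nonneg _) hCn2
        _ = C2 * C4 / (n:ℝ)^2 := by ring
    have t4 : ‖P * (E - 1 - u)‖ ≤ C4 * C2 / (n:ℝ)^2 := by
      calc ‖P * (E - 1 - u)‖ ≤ ‖P‖ * ‖E - 1 - u‖ := norm_mul_le _ _
        _ ≤ C4 * (C2 / (n:ℝ)^2) := mul_le_mul hPn hE2 (norm_nonneg _) hC4'
        _ = C4 * C2 / (n:ℝ)^2 := by ring
    have t5 : ‖u * (P - 1)‖ ≤ K * C5 / (n:ℝ)^2 := by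
      calc ‖u * (P - 1)‖ ≤ ‖u‖ * ‖P - 1‖ := norm_mul_le _ _
        _ ≤ ((n:ℝ)⁻¹ * K) * (C5 / (n:ℝ)) := mul_le_mul hun' hP1 (norm_nonneg _) hKn
        _ = K * C5 / (n:ℝ)^2 := by ring
    have t6 : ‖(P - 1) * u‖ ≤ C5 * K / (n:ℝ)^2 := by
      calc ‖(P - 1) * u‖ ≤ ‖P - 1‖ * ‖u‖ := norm_mul_le _ _
        _ ≤ (C5 / (n:ℝ)) * ((n:ℝ)⁻¹ * K) := mul_le_mul hP1 hun' (norm_nonneg _) hCn5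
        _ = C5 * K / (n:ℝ)^2 := by ring
    have total := norm_add_le_of_le (norm_add_le_of_le (norm_add_le_of_le
      (norm_add_le_of_le (norm_add_le_of_le hp t2) t3) t4) t5) t6
    exact total.trans (le_of_eq (by ring))
end Est

lemma exp_add_le_exp_add (x y : ℝ) (hx : 0 ≤ x) (hy : 0 ≤ y) :
    Real.exp x + y ≤ Real.exp (x + y) := by
  have h1 := Real.add_one_le_exp y
  have h2 := Real.one_le_exp hx
  rw [Real.exp_add]
  nlinarith [Real.exp_pos x]

section Main1
variable (𝕜 : Type*) [RCLike 𝕜] {𝔄 : Type*} [NormedRing 𝔄] [NormOneClass 𝔄]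
  [NormedAlgebra 𝕜 𝔄] [CompleteSpace 𝔄]

theorem lieTrotter_main (m : ℕ) (hm : 1 ≤ m) (A : ℕ → 𝔄) :
    Filter.Tendsto (fun n : ℕ => (fString 𝕜 A m n) ^ n) Filter.atTop
      (nhds (exp (∑ j ∈ Finset.Icc 1 m, A j))) := by
  obtain ⟨C, hC0, hC⟩ := fString_est 𝕜 A m hm
  set S := ∑ j ∈ Finset.Icc 1 m, A j with hSdef
  set C' : ℝ := C + ‖S‖ ^ 2 * Real.exp ‖S‖ with hC'
  have hC'0 : 0 ≤ C' := by positivity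
  set D : ℝ := ‖S‖ + C' with hD
  have hD0 : 0 ≤ D := by positivity
  rw [← tendsto_sub_nhds_zero_iff]
  apply squeeze_zero_norm' (a := fun n : ℕ => Real.exp D * C' / n)
  · filter_upwards [eventually_ge_atTop 1] with n hn
    have hn0 : (0:ℝ) < n := by exact_mod_cast hn
    have hnne : (n:ℝ) ≠ 0 := ne_of_gt hn0
    have hn1 : (1:ℝ) ≤ n := by exact_mod_cast hn
    have hn𝕜 : (n:𝕜) ≠ 0 := Nat.cast_ne_zero.mpr (by omega)
    set s : 𝔄 := (n:𝕜)⁻¹ • S with hsdef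
    set T := exp s with hTdef
    set F := fString 𝕜 A m n with hF
    have hsn : ‖s‖ = (n:ℝ)⁻¹ * ‖S‖ := by rw [hsdef, norm_smul, norm_inv_natCast]
    have hsS : ‖s‖ ≤ ‖S‖ := by
      rw [hsn]
      calc (n:ℝ)⁻¹ * ‖S‖ ≤ 1 * ‖S‖ := by
            apply mul_le_mul_of_nonneg_right _ (norm_nonneg _)
            rw [inv_le_one_iff₀]; right; exact hn1
        _ = ‖S‖ := one_mul _
    have hTpow : T ^ n = exp S := by
      rw [hTdef, ← exp_nsmul_K 𝕜, hsdef, ← Nat.cast_smul_eq_nsmul 𝕜, smul_smul,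
        mul_inv_cancel₀ hn𝕜, one_smul]
    have hTs : ‖T - 1 - s‖ ≤ (‖S‖ ^ 2 * Real.exp ‖S‖) / (n:ℝ) ^ 2 := by
      calc ‖T - 1 - s‖ ≤ ‖s‖ ^ 2 * Real.exp ‖s‖ := norm_exp_sub_one_sub_le 𝕜 s
        _ ≤ ((n:ℝ)⁻¹ * ‖S‖) ^ 2 * Real.exp ‖S‖ := by
            rw [hsn]
            exact mul_le_mul_of_nonneg_left (Real.exp_le_exp.mpr (by rw [← hsn]; exact hsS)) (by positivity)
        _ = (‖S‖ ^ 2 * Real.exp ‖S‖) / (n:ℝ) ^ 2 := by ring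
    have h1 : ‖F - T‖ ≤ C' / (n:ℝ) ^ 2 := by
      have hdec : F - T = (F - 1 - s) - (T - 1 - s) := by abel
      calc ‖F - T‖ = ‖(F - 1 - s) - (T - 1 - s)‖ := by rw [← hdec]
        _ ≤ ‖F - 1 - s‖ + ‖T - 1 - s‖ := norm_sub_le _ _
        _ ≤ C / (n:ℝ) ^ 2 + (‖S‖ ^ 2 * Real.exp ‖S‖) / (n:ℝ) ^ 2 := add_le_add (hC n hn) hTs
        _ = C' / (n:ℝ) ^ 2 := by rw [hC']; ring
    have hT1 : ‖T‖ ≤ Real.exp (D / n) := by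
      calc ‖T‖ ≤ Real.exp ‖s‖ := norm_exp_le' 𝕜 s norm_one.le
        _ ≤ Real.exp (D / n) := by
            apply Real.exp_le_exp.mpr
            rw [hsn, hD]
            rw [div_eq_inv_mul]
            apply mul_le_mul_of_nonneg_left _ (by positivity)
            linarith
    have hF1 : ‖F‖ ≤ Real.exp (D / n) := by
      have hC'n : C' / (n:ℝ) ^ 2 ≤ C' / n := by
        apply div_le_div_of_nonneg_left hC'0 hn0
        nlinarith
      calc ‖F‖ ≤ ‖T‖ + ‖F - T‖ := by simpa using norm_add_le T (F - T)
        _ ≤ Real.exp (‖S‖ / n) + C' / n := by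
            refine add_le_add ?_ (h1.trans hC'n)
            calc ‖T‖ ≤ Real.exp ‖s‖ := norm_exp_le' 𝕜 s norm_one.le
              _ ≤ Real.exp (‖S‖ / n) := by
                  apply Real.exp_le_exp.mpr
                  rw [hsn, div_eq_inv_mul]
        _ ≤ Real.exp (‖S‖ / n + C' / n) := by
            apply exp_add_le_exp_add _ _ (by positivity) (div_nonneg hC'0 hn0.le)
        _ = Real.exp (D / n) := by rw [hD]; congr 1; ring
    have hM1 : (1:ℝ) ≤ Real.exp (D / n) := Real.one_le_exp (by positivity)
    have tele := norm_pow_sub_pow_le hM1 hF1 hT1 n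
    have hpow : Real.exp (D / n) ^ n = Real.exp D := by
      rw [← Real.exp_nat_mul]
      congr 1
      field_simp
    calc ‖F ^ n - exp S‖ = ‖F ^ n - T ^ n‖ := by rw [hTpow]
      _ ≤ n * Real.exp (D / n) ^ n * ‖F - T‖ := tele
      _ ≤ n * Real.exp D * (C' / (n:ℝ) ^ 2) := by
          rw [hpow]
          exact mul_le_mul_of_nonneg_left h1 (by positivity)
      _ = Real.exp D * C' / n := by field_simp
  · exact tendsto_const_div_atTop_nhds_zero_nat _
end Main1

section Transfer
variable (𝕜 : Type*) [RCLike 𝕜] {𝔄 : Type*} [NormedRing 𝔄] [NormedAlgebra 𝕜 𝔄] [CompleteSpace 𝔄]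

/-- The left regular representation as a ring homomorphism. -/
noncomputable def lreg : 𝔄 →+* (𝔄 →L[𝕜] 𝔄) where
  toFun a := ContinuousLinearMap.mul 𝕜 𝔄 a
  map_one' := by ext x; simp
  map_mul' a b := by ext x; simp [mul_assoc]
  map_zero' := by ext x; simp
  map_add' a b := by ext x; simp [add_mul]

lemma lreg_continuous : Continuous (lreg 𝕜 (𝔄 := 𝔄)) :=
  (ContinuousLinearMap.mul 𝕜 𝔄).continuous

lemma lreg_smul (c : 𝕜) (a : 𝔄) : lreg 𝕜 (c • a) = c • lreg 𝕜 a :=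
  map_smul (ContinuousLinearMap.mul 𝕜 𝔄) c a

lemma norm_le_lreg (a : 𝔄) : ‖a‖ ≤ ‖lreg 𝕜 a‖ * ‖(1:𝔄)‖ := by
  have h : lreg 𝕜 a 1 = a := by simp [lreg]
  calc ‖a‖ = ‖lreg 𝕜 a 1‖ := by rw [h]
    _ ≤ ‖lreg 𝕜 a‖ * ‖(1:𝔄)‖ := ContinuousLinearMap.le_opNorm _ _

lemma lreg_exp (x : 𝔄) : lreg 𝕜 (exp x) = exp (lreg 𝕜 x) :=
  map_exp_of_mem_ball (𝕂 := 𝕜) (lreg 𝕜) (lreg_continuous 𝕜) x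
    ((expSeries_radius_eq_top 𝕜 𝔄).symm ▸ edist_lt_top _ _)

lemma lreg_fString (A : ℕ → 𝔄) (m n : ℕ) :
    lreg 𝕜 (fString 𝕜 A m n) = fString 𝕜 (fun j => lreg 𝕜 (A j)) m n := by
  unfold fString
  simp only [expSeries_sum_eq_exp']
  have key : ∀ (l : List ℕ) (x : 𝔄),
      lreg 𝕜 (l.foldl
        (fun acc j => exp ((2 * n : 𝕜)⁻¹ • A j) * acc * exp ((2 * n : 𝕜)⁻¹ • A j)) x) =
      l.foldl (fun acc j => exp ((2 * n : 𝕜)⁻¹ • lreg 𝕜 (A j)) * acc *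
        exp ((2 * n : 𝕜)⁻¹ • lreg 𝕜 (A j))) (lreg 𝕜 x) := by
    intro l
    induction l with
    | nil => intro x; rfl
    | cons j t ih =>
      intro x
      rw [List.foldl_cons, List.foldl_cons, ih]
      congr 1
      rw [map_mul, map_mul, lreg_exp, lreg_smul]
  rw [key, lreg_exp, lreg_smul]
end Transfer

theorem lieTrotter_fString' (𝕜 : Type*) [RCLike 𝕜] {𝔄 : Type*} [NormedRing 𝔄]
    [NormedAlgebra 𝕜 𝔄] [CompleteSpace 𝔄] (m : ℕ) (hm : 1 ≤ m) (A : ℕ → 𝔄) :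
    Filter.Tendsto (fun n : ℕ => (fString 𝕜 A m n) ^ n) Filter.atTop
      (nhds (exp (∑ j ∈ Finset.Icc 1 m, A j))) := by
  rcases subsingleton_or_nontrivial 𝔄 with hsub | hnt
  · have h : (fun n : ℕ => fString 𝕜 A m n ^ n) =
        fun _ => exp (∑ j ∈ Finset.Icc 1 m, A j) := funext fun n => Subsingleton.elim _ _
    rw [h]
    exact tendsto_const_nhds
  · haveI : NormOneClass (𝔄 →L[𝕜] 𝔄) :=
      ⟨by rw [ContinuousLinearMap.one_def]; exact ContinuousLinearMap.norm_id⟩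
    have hT := lieTrotter_main 𝕜 m hm (fun j => lreg 𝕜 (A j))
    have hsum : exp (∑ j ∈ Finset.Icc 1 m, lreg 𝕜 (A j)) =
        lreg 𝕜 (exp (∑ j ∈ Finset.Icc 1 m, A j)) := by
      rw [← map_sum, lreg_exp]
    have hfun : (fun n : ℕ => fString 𝕜 (fun j => lreg 𝕜 (A j)) m n ^ n) =
        fun n : ℕ => lreg 𝕜 (fString 𝕜 A m n ^ n) := by
      funext n
      rw [map_pow, lreg_fString]
    rw [hfun, hsum] at hT
    rw [← tendsto_sub_nhds_zero_iff]
    apply squeeze_zero_norm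
      (a := fun n : ℕ => ‖lreg 𝕜 (fString 𝕜 A m n ^ n) - lreg 𝕜 (exp (∑ j ∈ Finset.Icc 1 m, A j))‖
        * ‖(1:𝔄)‖)
    · intro n
      calc ‖fString 𝕜 A m n ^ n - exp (∑ j ∈ Finset.Icc 1 m, A j)‖
          ≤ ‖lreg 𝕜 (fString 𝕜 A m n ^ n - exp (∑ j ∈ Finset.Icc 1 m, A j))‖ * ‖(1:𝔄)‖ :=
            norm_le_lreg 𝕜 _
        _ = ‖lreg 𝕜 (fString 𝕜 A m n ^ n) - lreg 𝕜 (exp (∑ j ∈ Finset.Icc 1 m, A j))‖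
            * ‖(1:𝔄)‖ := by rw [map_sub]
    · have h0 := tendsto_sub_nhds_zero_iff.mpr hT
      have h1 := h0.norm
      simp only [norm_zero] at h1
      simpa using h1.mul_const ‖(1:𝔄)‖


theorem lieTrotter_fString (𝕜 : Type*) [RCLike 𝕜] {𝔄 : Type*} [NormedRing 𝔄]
    [NormedAlgebra 𝕜 𝔄] [CompleteSpace 𝔄] (m : ℕ) (hm : 1 ≤ m) (A : ℕ → 𝔄) :
    Filter.Tendsto (fun n : ℕ => (fString 𝕜 A m n) ^ n) Filter.atTop
      (nhds ((expSeries 𝕜 𝔄).sum (∑ j ∈ Finset.Icc 1 m, A j))) := by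
  rw [expSeries_sum_eq_exp']
  exact lieTrotter_fString' 𝕜 m hm A
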